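/- A twig query q is satisfiable by a disjunction-free multiplicity schema S (some tree satisfies both S and q) if and only if q can be embedded in the dependency graph G_S of S. -/

import Mathlib

open scoped Classical

variable {α : Type}

/-- Unordered words: multisets of symbols, as occurrence-count functions. -/
abbrev UWord (α : Type) := α → ℕ

/-- Multiplicities `*`, `+`, `?`, `0`, `1`. -/
inductive Mult : Type where
  | zero | one | opt | plus | star
deriving DecidableEq

/-- Interpretation of multiplicities as sets of natural numbers. -/
def Mult.sem : Mult → Set ℕ
  | .zero => {0}
  | .one => {1}
  | .opt => {0, 1}
  | .plus => {n | 0 < n}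
  | .star => Set.univ

/-- A disjunction `a₁^{M₁} | … | a_k^{M_k}`. -/
abbrev Disj (α : Type) := List (α × Mult)

/-- A disjunctive multiplicity expression `D₁^{M₁} ⊎ … ⊎ D_n^{M_n}`. -/
abbrev DME (α : Type) := List (Disj α × Mult)

/-- Language of `a^M`. -/
def singleLang (a : α) (m : Mult) : Set (UWord α) :=
  {w | w a ∈ m.sem ∧ ∀ b, b ≠ a → w b = 0}

/-- Language of a disjunction. -/
def disjLang (D : Disj α) : Set (UWord α) :=
  {w | ∃ p ∈ D, w ∈ singleLang p.1 p.2}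

/-- Pointwise (multiset) sum of a list of unordered words. -/
def sumWords (ws : List (UWord α)) : UWord α := fun a => (ws.map (fun u => u a)).sum

/-- Language of `D^M`. -/
def powLang (L : Set (UWord α)) (m : Mult) : Set (UWord α) :=
  {w | ∃ ws : List (UWord α), ws.length ∈ m.sem ∧ (∀ u ∈ ws, u ∈ L) ∧ w = sumWords ws}

/-- Language of a disjunctive multiplicity expression. -/
def dmeLang (E : DME α) : Set (UWord α) :=
  {w | ∃ ws : List (UWord α),
      List.Forall₂ (fun p u => u ∈ powLang (disjLang p.1) p.2) E ws ∧ w = sumWords ws}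

/-- Symbols occurring in a disjunctive multiplicity expression. -/
def dmeSymbols (E : DME α) : List α := E.flatMap (fun p => p.1.map Prod.fst)

/-- Normalized disjunctive multiplicity expression (each symbol occurs at most once,
each disjunction nonempty, and the two normal-form conditions of the paper). -/
def Normalized (E : DME α) : Prop :=
  (dmeSymbols E).Nodup ∧
  ∀ p ∈ E, p.1 ≠ [] ∧
    (p.2 ≠ Mult.one → p.2 = Mult.plus ∧ ∀ q ∈ p.1, q.2 = Mult.one) ∧
    ((∃ q ∈ p.1, (0 : ℕ) ∈ q.2.sem) → ∀ q ∈ p.1, (0 : ℕ) ∈ q.2.sem)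

/-- Conflicting pairs of siblings `C_E`. -/
def CE (E : DME α) : Set (α × α) :=
  {p | ¬ ∃ w ∈ dmeLang E, w p.1 ≠ 0 ∧ w p.2 ≠ 0}

/-- Extended cardinality map `N_E`. -/
def NE (E : DME α) : Set (α × ℕ) :=
  {p | ∃ w ∈ dmeLang E, w p.1 = p.2}

/-- Sets of required symbols `P_E`. -/
def PE (E : DME α) : Set (Set α) :=
  {X | ∀ w ∈ dmeLang E, ∃ a ∈ X, w a ≠ 0}

/-- Consistency of an unordered word with a characterizing triple. -/
def ConsTriple (w : UWord α) (C : Set (α × α)) (N : Set (α × ℕ)) (P : Set (Set α)) : Prop :=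
  (∀ p ∈ C, ¬ (w p.1 ≠ 0 ∧ w p.2 ≠ 0)) ∧
  (∀ a, (a, w a) ∈ N) ∧
  (∀ X ∈ P, ∃ a ∈ X, w a ≠ 0)

/-- Language of a disjunction-free multiplicity expression given as a list of
symbol/multiplicity pairs. -/
def dfLang (l : List (α × Mult)) : Set (UWord α) :=
  {w | (∀ p ∈ l, w p.1 ∈ p.2.sem) ∧ ∀ b, b ∉ l.map Prod.fst → w b = 0}

/-- Finite unordered trees. -/
inductive UTree (α : Type) : Type where
  | node : α → List (UTree α) → UTree α

def UTree.lab : UTree α → α | .node a _ => a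

def UTree.children : UTree α → List (UTree α) | .node _ ts => ts

/-- Twig queries: labels in `Σ ∪ {⋆}` (wildcard = `none`); each child subquery is tagged
with `false` for a child edge and `true` for a descendant edge. -/
inductive Twig (α : Type) : Type where
  | node : Option α → List (Twig α × Bool) → Twig α

/-- Proper subtree (proper descendant) relation. -/
inductive StrictDesc : UTree α → UTree α → Prop where
  | child {s t : UTree α} : s ∈ t.children → StrictDesc s t
  | step {s u t : UTree α} : StrictDesc s u → u ∈ t.children → StrictDesc s t

/-- `Sat t q`: the twig query `q` can be embedded in the tree `t`
(root to root, child edges to child edges, descendant edges to proper descendants,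
labels preserved up to wildcard). -/
def Sat : UTree α → Twig α → Prop
  | t, .node l qs =>
      (∀ x ∈ l, x = t.lab) ∧
      ∀ p ∈ qs, (p.2 = false → ∃ t' ∈ t.children, Sat t' p.1) ∧
                (p.2 = true → ∃ t', StrictDesc t' t ∧ Sat t' p.1)
termination_by t q => sizeOf q
decreasing_by
  all_goals
    obtain ⟨q', b'⟩ := p
    have h1 : sizeOf ((q', b') : Twig α × Bool) < sizeOf qs := List.sizeOf_lt_of_mem (by assumption)
    simp at h1 ⊢
    omega

/-- `TEmb t' t` : the tree `t'` can be embedded in the tree `t` (root-, child-, and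
label-preserving). -/
def TEmb : UTree α → UTree α → Prop
  | .node a ts', t => t.lab = a ∧ ∀ s' ∈ ts', ∃ s ∈ t.children, TEmb s' s

/-- `QGEmb E a q` : the twig query `q` can be embedded in the rooted graph with edge
relation `E` at root `a`. -/
def QGEmb (E : α → α → Prop) : α → Twig α → Prop
  | a, .node l qs =>
      (∀ x ∈ l, x = a) ∧
      ∀ p ∈ qs, (p.2 = false → ∃ b, E a b ∧ QGEmb E b p.1) ∧
                (p.2 = true → ∃ b, Relation.TransGen E a b ∧ QGEmb E b p.1)
termination_by a q => sizeOf q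
decreasing_by
  all_goals
    obtain ⟨q', b'⟩ := p
    have h1 : sizeOf ((q', b') : Twig α × Bool) < sizeOf qs := List.sizeOf_lt_of_mem (by assumption)
    simp at h1 ⊢
    omega

/-- Labeled paths of a tree: sequences of labels along root-to-node paths. -/
inductive IsLabPath : UTree α → List α → Prop where
  | root {a : α} {ts : List (UTree α)} : IsLabPath (UTree.node a ts) [a]
  | cons {a : α} {ts : List (UTree α)} {s : UTree α} {p : List α} :
      s ∈ ts → IsLabPath s p → IsLabPath (UTree.node a ts) (a :: p)

/-- Paths of a rooted graph: nonempty vertex sequences starting at the root and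
following edges. -/
def IsGPath (E : α → α → Prop) (root : α) (p : List α) : Prop :=
  p ≠ [] ∧ p.head? = some root ∧ p.Chain' E

/-- The unfolding of a rooted graph, truncated at depth `n`.  For a graph with no cycle
reachable from the root, taking `n = Fintype.card α` yields the full unfolding. -/
noncomputable def unfoldG [Fintype α] (E : α → α → Prop) : ℕ → α → UTree α
  | 0, a => .node a []
  | n + 1, a => .node a (((Finset.univ.filter fun b => E a b).toList).map (unfoldG E n))

/-- Number of leaves of a tree. -/
def leafCount : UTree α → ℕ
  | .node _ ts => if ts.isEmpty then 1 else (ts.attach.map (fun s => leafCount s.1)).sum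
decreasing_by
  have h1 := List.sizeOf_lt_of_mem s.2
  simp
  omega

/-- Disjunction-free multiplicity schema: a root label together with, for each label `a`,
a disjunction-free multiplicity expression given as the multiplicity `R a b` of every
symbol `b` (`Mult.zero` meaning `b` does not occur). -/
structure MS (α : Type) where
  root : α
  R : α → α → Mult

/-- Every node's children-label multiset matches the rule for the node's label. -/
inductive LocalOK [DecidableEq α] (R : α → α → Mult) : UTree α → Prop where
  | node {a : α} {ts : List (UTree α)} :
      (∀ b, ((ts.map UTree.lab).count b) ∈ (R a b).sem) →
      (∀ s ∈ ts, LocalOK R s) →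
      LocalOK R (UTree.node a ts)

/-- A tree satisfies a disjunction-free multiplicity schema. -/
def SatS [DecidableEq α] (S : MS α) (t : UTree α) : Prop :=
  t.lab = S.root ∧ LocalOK S.R t

/-- Edges of the universal dependency graph: `b` occurs in `R a` with multiplicity `+` or `1`. -/
def uEdge (S : MS α) (a b : α) : Prop := S.R a b = Mult.plus ∨ S.R a b = Mult.one

/-- Edges of the dependency graph: `b` occurs in `R a` with multiplicity in `{*,+,?,1}`. -/
def dEdge (S : MS α) (a b : α) : Prop := S.R a b ≠ Mult.zero

/-- A simulation of the rooted graph `(α, root, E)` in the tree `t`. -/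
def IsSimulation (E : α → α → Prop) (root : α) (t : UTree α) (R : α → UTree α → Prop) : Prop :=
  R root t ∧ (∀ a s, R a s → s.lab = a) ∧
  (∀ a s, R a s → ∀ b, E a b → ∃ s' ∈ s.children, R b s')

/-- One fuse step: two sibling nodes with the same label are merged into a single node
whose children are the children of both (applied anywhere in the tree). -/
inductive Fuse : UTree α → UTree α → Prop where
  | here {a b : α} {l₁ l₂ l₃ cs₁ cs₂ : List (UTree α)} :
      Fuse (UTree.node a (l₁ ++ UTree.node b cs₁ :: l₂ ++ UTree.node b cs₂ :: l₃))
           (UTree.node a (l₁ ++ UTree.node b (cs₁ ++ cs₂) :: l₂ ++ l₃))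
  | there {a : α} {s s' : UTree α} {l₁ l₂ : List (UTree α)} :
      Fuse s s' → Fuse (UTree.node a (l₁ ++ s :: l₂)) (UTree.node a (l₁ ++ s' :: l₂))

/-- One add step: an arbitrary new subtree is attached as an additional child of some
node of the tree. -/
inductive AddOp : UTree α → UTree α → Prop where
  | here {a : α} {s : UTree α} {l : List (UTree α)} :
      AddOp (UTree.node a l) (UTree.node a (s :: l))
  | there {a : α} {s s' : UTree α} {l₁ l₂ : List (UTree α)} :
      AddOp s s' → AddOp (UTree.node a (l₁ ++ s :: l₂)) (UTree.node a (l₁ ++ s' :: l₂))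
section Aux

variable [Fintype α] [DecidableEq α] (S : MS α)

theorem ue_de {a b : α} (h : uEdge S a b) : dEdge S a b := by
  rcases h with h | h <;> simp [dEdge, h]

noncomputable def minT (hwf : WellFounded (Function.swap (uEdge S))) : α → UTree α :=
  hwf.fix (fun a ih => UTree.node a
    ((Finset.univ.filter (fun b => uEdge S a b)).toList.attach.map
      (fun b => ih b.1 (by
        have := b.2
        simp only [Finset.mem_toList, Finset.mem_filter] at this
        exact this.2))))

variable (hwf : WellFounded (Function.swap (uEdge S)))

theorem minT_eq (a : α) : minT S hwf a = UTree.node a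
    ((Finset.univ.filter (fun b => uEdge S a b)).toList.attach.map
      (fun b => minT S hwf b.1)) := by
  conv_lhs => rw [minT, hwf.fix_eq]
  rfl

noncomputable def Tn : ℕ → α → UTree α
  | 0, a => minT S hwf a
  | n+1, a => .node a ((Finset.univ.filter (fun b => dEdge S a b)).toList.map (Tn n))

theorem lab_Tn (n : ℕ) (a : α) : (Tn S hwf n a).lab = a := by
  cases n with
  | zero => rw [Tn, minT_eq]; rfl
  | succ n => rfl

theorem children_Tn_zero {s : UTree α} {a : α} :
    s ∈ (Tn S hwf 0 a).children ↔ ∃ b, uEdge S a b ∧ s = Tn S hwf 0 b := by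
  rw [Tn, minT_eq]
  simp only [UTree.children, List.mem_map, List.mem_attach, true_and, Subtype.exists,
    Finset.mem_toList, Finset.mem_filter, Finset.mem_univ, true_and]
  constructor
  · rintro ⟨b, hb, rfl⟩; exact ⟨b, hb, by rw [Tn]⟩
  · rintro ⟨b, hb, rfl⟩; exact ⟨b, hb, by rw [Tn]⟩

theorem children_Tn_succ {s : UTree α} {a : α} {n : ℕ} :
    s ∈ (Tn S hwf (n+1) a).children ↔ ∃ b, dEdge S a b ∧ s = Tn S hwf n b := by
  rw [Tn]
  simp only [UTree.children, List.mem_map, Finset.mem_toList, Finset.mem_filter,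
    Finset.mem_univ, true_and]
  constructor
  · rintro ⟨b, hb, rfl⟩; exact ⟨b, hb, rfl⟩
  · rintro ⟨b, hb, rfl⟩; exact ⟨b, hb, rfl⟩

theorem lab_minT (a : α) : (minT S hwf a).lab = a := by rw [minT_eq]; rfl

theorem one_mem_sem {a b : α} (h : dEdge S a b) : (1 : ℕ) ∈ (S.R a b).sem := by
  cases hR : S.R a b <;> simp_all [Mult.sem, dEdge]

theorem localOK_minT (a : α) : LocalOK S.R (minT S hwf a) := by
  induction a using hwf.induction with
  | _ a ih =>
    rw [minT_eq]
    have hlab : (((Finset.univ.filter (fun b => uEdge S a b)).toList.attach.map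
        (fun b => minT S hwf b.1)).map UTree.lab) =
        (Finset.univ.filter (fun b => uEdge S a b)).toList := by
      rw [List.map_map]
      simp [Function.comp, lab_minT]
    refine LocalOK.node ?_ ?_
    · intro b
      rw [hlab]
      by_cases hb : uEdge S a b
      · rw [List.count_eq_one_of_mem (Finset.nodup_toList _) (by simp [hb])]
        exact one_mem_sem S (ue_de S hb)
      · rw [List.count_eq_zero_of_not_mem (by simp [hb])]
        cases hR : S.R a b <;>
          simp_all [Mult.sem, uEdge] <;> exact hb (by simp [hR])
    · intro s hs
      simp only [List.mem_map, List.mem_attach, true_and, Subtype.exists,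
        Finset.mem_toList, Finset.mem_filter, Finset.mem_univ, true_and] at hs
      obtain ⟨b, hb, rfl⟩ := hs
      exact ih b hb

theorem localOK_Tn (n : ℕ) (a : α) : LocalOK S.R (Tn S hwf n a) := by
  induction n generalizing a with
  | zero => rw [Tn]; exact localOK_minT S hwf a
  | succ n ihn =>
    rw [Tn]
    have hlab : ((((Finset.univ.filter (fun b => dEdge S a b)).toList.map
        (Tn S hwf n))).map UTree.lab) =
        (Finset.univ.filter (fun b => dEdge S a b)).toList := by
      rw [List.map_map]
      exact (List.map_congr_left (fun b _ => lab_Tn S hwf n b)).trans (List.map_id _)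
    refine LocalOK.node ?_ ?_
    · intro b
      rw [hlab]
      by_cases hb : dEdge S a b
      · rw [List.count_eq_one_of_mem (Finset.nodup_toList _) (by simp [hb])]
        exact one_mem_sem S hb
      · rw [List.count_eq_zero_of_not_mem (by simp [hb])]
        rw [not_not.mp hb]
        simp [Mult.sem]
    · intro s hs
      simp only [List.mem_map, Finset.mem_toList, Finset.mem_filter,
        Finset.mem_univ, true_and] at hs
      obtain ⟨b, hb, rfl⟩ := hs
      exact ihn b


theorem childChar {s : UTree α} {n : ℕ} {a : α} (h : s ∈ (Tn S hwf n a).children) :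
    ∃ b m, s = Tn S hwf m b ∧ dEdge S a b ∧
      ∀ n', n ≤ n' → ∃ m', m ≤ m' ∧ Tn S hwf m' b ∈ (Tn S hwf n' a).children := by
  cases n with
  | zero =>
    obtain ⟨b, hb, rfl⟩ := (children_Tn_zero S hwf).mp h
    refine ⟨b, 0, rfl, ue_de S hb, ?_⟩
    intro n' _
    cases n' with
    | zero => exact ⟨0, le_rfl, (children_Tn_zero S hwf).mpr ⟨b, hb, rfl⟩⟩
    | succ j => exact ⟨j, Nat.zero_le _, (children_Tn_succ S hwf).mpr ⟨b, ue_de S hb, rfl⟩⟩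
  | succ i =>
    obtain ⟨b, hb, rfl⟩ := (children_Tn_succ S hwf).mp h
    refine ⟨b, i, rfl, hb, ?_⟩
    intro n' hn'
    obtain ⟨j, rfl⟩ := Nat.exists_eq_add_of_le hn'
    refine ⟨i + j, Nat.le_add_right _ _, ?_⟩
    have e : i + 1 + j = (i + j) + 1 := by omega
    rw [e]
    exact (children_Tn_succ S hwf).mpr ⟨b, hb, rfl⟩

theorem descChar {s t : UTree α} (h : StrictDesc s t) :
    ∀ n a, t = Tn S hwf n a →
      ∃ m c, s = Tn S hwf m c ∧
        ∀ n', n ≤ n' → ∃ m', m ≤ m' ∧ StrictDesc (Tn S hwf m' c) (Tn S hwf n' a) := by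
  induction h with
  | child hs =>
    rintro n a rfl
    obtain ⟨b, m, rfl, _, hch⟩ := childChar S hwf hs
    refine ⟨m, b, rfl, fun n' hn' => ?_⟩
    obtain ⟨m', hm', hmem⟩ := hch n' hn'
    exact ⟨m', hm', StrictDesc.child hmem⟩
  | step hsu hu ih =>
    rintro n a rfl
    obtain ⟨b, k, hueq, _, hch⟩ := childChar S hwf hu
    obtain ⟨m, c, rfl, hrec⟩ := ih k b hueq
    refine ⟨m, c, rfl, fun n' hn' => ?_⟩
    obtain ⟨k', hk', hmem⟩ := hch n' hn'
    obtain ⟨m', hm', hdesc⟩ := hrec k' hk'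
    exact ⟨m', hm', StrictDesc.step hdesc hmem⟩

theorem satMono : ∀ (q : Twig α) (n n' : ℕ) (a : α), n ≤ n' →
    Sat (Tn S hwf n a) q → Sat (Tn S hwf n' a) q
  | .node l qs, n, n', a, hnn, hs => by
    rw [Sat] at hs ⊢
    obtain ⟨hl, hqs⟩ := hs
    simp only [lab_Tn] at hl ⊢
    refine ⟨hl, fun p hp => ⟨?_, ?_⟩⟩
    · intro hfalse
      obtain ⟨t', ht', hsat⟩ := (hqs p hp).1 hfalse
      obtain ⟨b, m, rfl, _, hch⟩ := childChar S hwf ht'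
      obtain ⟨m', hm', hmem⟩ := hch n' hnn
      exact ⟨Tn S hwf m' b, hmem, satMono p.1 m m' b hm' hsat⟩
    · intro htrue
      obtain ⟨t', hdesc, hsat⟩ := (hqs p hp).2 htrue
      obtain ⟨m, c, rfl, hrec⟩ := descChar S hwf hdesc n a rfl
      obtain ⟨m', hm', hdesc'⟩ := hrec n' hnn
      exact ⟨Tn S hwf m' c, hdesc', satMono p.1 m m' c hm' hsat⟩
termination_by q => sizeOf q
decreasing_by
  all_goals
    obtain ⟨q', b'⟩ := p
    have h1 : sizeOf ((q', b') : Twig α × Bool) < sizeOf qs := List.sizeOf_lt_of_mem hp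
    simp at h1 ⊢
    omega

theorem descAt {a b : α} (h : Relation.TransGen (dEdge S) a b) :
    ∀ m, ∃ n₀, ∀ n, n₀ ≤ n → ∃ k, m ≤ k ∧ StrictDesc (Tn S hwf k b) (Tn S hwf n a) := by
  induction h using Relation.TransGen.head_induction_on with
  | single hab =>
    intro m
    refine ⟨m + 1, fun n hn => ?_⟩
    obtain ⟨k, rfl⟩ : ∃ k, n = k + 1 := ⟨n - 1, by omega⟩
    exact ⟨k, by omega, StrictDesc.child ((children_Tn_succ S hwf).mpr ⟨_, hab, rfl⟩)⟩
  | head hac htr ih =>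
    intro m
    obtain ⟨n₀, hn₀⟩ := ih m
    refine ⟨n₀ + 1, fun n hn => ?_⟩
    obtain ⟨j, rfl⟩ : ∃ j, n = j + 1 := ⟨n - 1, by omega⟩
    obtain ⟨k, hk, hdesc⟩ := hn₀ j (by omega)
    exact ⟨k, hk, StrictDesc.step hdesc ((children_Tn_succ S hwf).mpr ⟨_, hac, rfl⟩)⟩

theorem exists_bound {β : Type} (l : List β) (P : β → ℕ → Prop)
    (h : ∀ x ∈ l, ∃ N, ∀ n, N ≤ n → P x n) : ∃ N, ∀ n, N ≤ n → ∀ x ∈ l, P x n := by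
  induction l with
  | nil => exact ⟨0, by simp⟩
  | cons x xs ih =>
    obtain ⟨N₁, h₁⟩ := h x (by simp)
    obtain ⟨N₂, h₂⟩ := ih (fun y hy => h y (by simp [hy]))
    refine ⟨max N₁ N₂, fun n hn y hy => ?_⟩
    rcases List.mem_cons.mp hy with rfl | hy
    · exact h₁ n (le_trans (le_max_left _ _) hn)
    · exact h₂ n (le_trans (le_max_right _ _) hn) y hy

theorem back : ∀ (q : Twig α) (a : α), QGEmb (dEdge S) a q → ∃ n, Sat (Tn S hwf n a) q
  | .node l qs, a, h => by
    rw [QGEmb] at h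
    obtain ⟨hl, hqs⟩ := h
    have key : ∀ p ∈ qs, ∃ N, ∀ n, N ≤ n →
        ((p.2 = false → ∃ t' ∈ (Tn S hwf n a).children, Sat t' p.1) ∧
         (p.2 = true → ∃ t', StrictDesc t' (Tn S hwf n a) ∧ Sat t' p.1)) := by
      intro p hp
      cases hb : p.2 with
      | false =>
        obtain ⟨b, hab, hq⟩ := (hqs p hp).1 hb
        obtain ⟨m, hm⟩ := back p.1 b hq
        refine ⟨m + 1, fun n hn => ⟨fun _ => ?_, fun htr => by simp [hb] at htr⟩⟩
        obtain ⟨k, rfl⟩ : ∃ k, n = k + 1 := ⟨n - 1, by omega⟩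
        exact ⟨Tn S hwf k b, (children_Tn_succ S hwf).mpr ⟨b, hab, rfl⟩,
          satMono S hwf p.1 m k b (by omega) hm⟩
      | true =>
        obtain ⟨b, hab, hq⟩ := (hqs p hp).2 hb
        obtain ⟨m, hm⟩ := back p.1 b hq
        obtain ⟨n₀, hn₀⟩ := descAt S hwf hab m
        refine ⟨n₀, fun n hn => ⟨fun hf => by simp [hb] at hf, fun _ => ?_⟩⟩
        obtain ⟨k, hk, hdesc⟩ := hn₀ n hn
        exact ⟨Tn S hwf k b, hdesc, satMono S hwf p.1 m k b hk hm⟩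
    obtain ⟨N, hN⟩ := exists_bound qs _ key
    refine ⟨N, ?_⟩
    rw [Sat]
    simp only [lab_Tn]
    exact ⟨hl, fun p hp => hN N le_rfl p hp⟩
termination_by q => sizeOf q
decreasing_by
  all_goals
    obtain ⟨q', b'⟩ := p
    have h1 : sizeOf ((q', b') : Twig α × Bool) < sizeOf qs := List.sizeOf_lt_of_mem hp
    simp at h1 ⊢
    omega

theorem child_edge {t s : UTree α} (hT : LocalOK S.R t) (hs : s ∈ t.children) :
    dEdge S t.lab s.lab ∧ LocalOK S.R s := by
  cases hT with
  | @node a ts hc hrec =>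
    refine ⟨?_, hrec s hs⟩
    intro hzero
    replace hzero : S.R a s.lab = Mult.zero := hzero
    have h1 := hc s.lab
    rw [hzero] at h1
    simp only [Mult.sem, Set.mem_singleton_iff] at h1
    have h2 : s.lab ∈ ts.map UTree.lab := List.mem_map_of_mem hs
    rw [← List.count_pos_iff] at h2
    omega

theorem desc_edge {s t : UTree α} (h : StrictDesc s t) :
    LocalOK S.R t → Relation.TransGen (dEdge S) t.lab s.lab ∧ LocalOK S.R s := by
  induction h with
  | child hs =>
    intro hT
    obtain ⟨he, hl⟩ := child_edge S hT hs
    exact ⟨Relation.TransGen.single he, hl⟩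
  | step hsu hu ih =>
    intro hT
    obtain ⟨he, hlu⟩ := child_edge S hT hu
    obtain ⟨htr, hls⟩ := ih hlu
    exact ⟨Relation.TransGen.head he htr, hls⟩

theorem fwd : ∀ (q : Twig α) (t : UTree α), LocalOK S.R t → Sat t q → QGEmb (dEdge S) t.lab q
  | .node l qs, t, hT, hs => by
    rw [Sat] at hs
    rw [QGEmb]
    obtain ⟨hl, hqs⟩ := hs
    refine ⟨hl, fun p hp => ⟨?_, ?_⟩⟩
    · intro hf
      obtain ⟨t', ht', hsat⟩ := (hqs p hp).1 hf
      obtain ⟨he, hl'⟩ := child_edge S hT ht'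
      exact ⟨t'.lab, he, fwd p.1 t' hl' hsat⟩
    · intro htr
      obtain ⟨t', hdesc, hsat⟩ := (hqs p hp).2 htr
      obtain ⟨he, hl'⟩ := desc_edge S hdesc hT
      exact ⟨t'.lab, he, fwd p.1 t' hl' hsat⟩
termination_by q => sizeOf q
decreasing_by
  all_goals
    obtain ⟨q', b'⟩ := p
    have h1 : sizeOf ((q', b') : Twig α × Bool) < sizeOf qs := List.sizeOf_lt_of_mem hp
    simp at h1 ⊢
    omega

end Aux

/-- Lemma 7(1): a twig query is satisfiable by a pruned
disjunction-free multiplicity schema iff it embeds in the dependency graph. -/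
theorem query_satisfiability_iff_embedding_in_dependency_graph
    {α : Type} [Fintype α] [DecidableEq α] (S : MS α)
    (hpruned : ∀ a : α, ¬ Relation.TransGen (uEdge S) a a)
    (q : Twig α) :
    (∃ t : UTree α, SatS S t ∧ Sat t q) ↔ QGEmb (dEdge S) S.root q := by
  have hwf : WellFounded (Function.swap (uEdge S)) := by
    have h1 : WellFounded (Function.swap (Relation.TransGen (uEdge S))) := by
      haveI : IsTrans α (Function.swap (Relation.TransGen (uEdge S))) :=
        ⟨fun a b c h1 h2 => Relation.TransGen.trans h2 h1⟩
      haveI : IsIrrefl α (Function.swap (Relation.TransGen (uEdge S))) :=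
        ⟨fun a h => hpruned a h⟩
      exact Finite.wellFounded_of_trans_of_irrefl _
    exact Subrelation.wf (r := Function.swap (Relation.TransGen (uEdge S)))
      (fun {a b} h => Relation.TransGen.single h) h1
  constructor
  · rintro ⟨t, ⟨hlab, hlok⟩, hsat⟩
    have := fwd S q t hlok hsat
    rwa [hlab] at this
  · intro h
    obtain ⟨n, hn⟩ := back S hwf q S.root h
    exact ⟨Tn S hwf n S.root, ⟨lab_Tn S hwf n S.root, localOK_Tn S hwf n S.root⟩, hn⟩
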